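/- Let G be a finitely generated group of subexponential growth, and let N be a normal subgroup of G such that the quotient group G/N is solvable. Then N is finitely generated. -/

import Mathlib

open Pointwise Subgroup Function

namespace RossetAux

variable {G : Type*} [Group G]

/-- Bundle of hypotheses: `S` is a finite symmetric generating set witnessing
subexponential growth. -/
def Good (S : Set G) : Prop :=
  S.Finite ∧ S⁻¹ = S ∧ Subgroup.closure S = ⊤ ∧
    ∀ c : ℝ, 1 < c → ∃ R : ℕ, ∀ r : ℕ, R ≤ r →
      ((((S ∪ {1} : Set G)) ^ r).ncard : ℝ) ≤ c ^ r

lemma ball_mono (S : Set G) {m n : ℕ} (h : m ≤ n) :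
    (S ∪ {1} : Set G) ^ m ⊆ (S ∪ {1}) ^ n :=
  Set.pow_subset_pow_right (by simp) h

lemma ball_finite {S : Set G} (hfin : S.Finite) (r : ℕ) :
    ((S ∪ {1} : Set G) ^ r).Finite := by
  induction r with
  | zero => simp
  | succ n ih => rw [pow_succ]; exact ih.mul (hfin.union (Set.finite_singleton 1))

lemma ball_inv {S : Set G} (hsym : S⁻¹ = S) (r : ℕ) :
    ((S ∪ {1} : Set G) ^ r)⁻¹ = (S ∪ {1}) ^ r := by
  rw [← inv_pow]
  have h1 : (S ∪ {1} : Set G)⁻¹ = S⁻¹ ∪ {1} := by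
    ext x; simp [Set.mem_inv, inv_eq_one]
  rw [h1, hsym]

lemma exists_mem_ball {S : Set G} (hsym : S⁻¹ = S) (hgen : Subgroup.closure S = ⊤) (g : G) :
    ∃ r : ℕ, g ∈ (S ∪ {1} : Set G) ^ r := by
  have hg : g ∈ Subgroup.closure S := by rw [hgen]; trivial
  induction hg using Subgroup.closure_induction with
  | mem s hs => exact ⟨1, by rw [pow_one]; exact Set.mem_union_left _ hs⟩
  | one => exact ⟨0, by simp⟩
  | mul a b _ _ ha hb =>
    obtain ⟨r, hr⟩ := ha; obtain ⟨r', hr'⟩ := hb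
    exact ⟨r + r', by rw [pow_add]; exact Set.mul_mem_mul hr hr'⟩
  | inv a _ ha =>
    obtain ⟨r, hr⟩ := ha
    exact ⟨r, by rw [← ball_inv hsym]; exact Set.inv_mem_inv.2 hr⟩

lemma exists_ball_superset {S : Set G} (hsym : S⁻¹ = S) (hgen : Subgroup.closure S = ⊤)
    {A : Set G} (hA : A.Finite) : ∃ L : ℕ, 1 ≤ L ∧ A ⊆ (S ∪ {1} : Set G) ^ L := by
  refine Set.Finite.induction_on
    (motive := fun A _ => ∃ L : ℕ, 1 ≤ L ∧ A ⊆ (S ∪ {1} : Set G) ^ L) A hA ⟨1, le_refl 1, by simp⟩ ?_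
  rintro a A' - - ⟨L, hL1, hL⟩
  obtain ⟨r, hr⟩ := exists_mem_ball hsym hgen a
  refine ⟨max L r, le_trans hL1 (le_max_left _ _), ?_⟩
  rw [Set.insert_subset_iff]
  exact ⟨ball_mono S (le_max_right _ _) hr,
    hL.trans (ball_mono S (le_max_left _ _))⟩

/-- conjugate `u` by `t ^ j`. -/
def conj' (t u : G) (j : ℕ) : G := (t ^ j) ⁻¹ * u * t ^ j

def Aset (t : G) (U : Set G) (m : ℕ) : Set G := {x | ∃ u ∈ U, ∃ j ≤ m, x = conj' t u j}

lemma Aset_finite (t : G) {U : Set G} (hU : U.Finite) (m : ℕ) : (Aset t U m).Finite := by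
  have : Aset t U m ⊆ (fun p : G × ℕ => conj' t p.1 p.2) '' (U ×ˢ Set.Iic m) := by
    rintro x ⟨u, hu, j, hj, rfl⟩
    exact ⟨(u, j), ⟨hu, hj⟩, rfl⟩
  exact Set.Finite.subset ((hU.prod (Set.finite_Iic m)).image _) this

lemma Aset_mono (t : G) (U : Set G) {m m' : ℕ} (h : m ≤ m') : Aset t U m ⊆ Aset t U m' := by
  rintro x ⟨u, hu, j, hj, rfl⟩; exact ⟨u, hu, j, hj.trans h, rfl⟩

def Agrp (t : G) (U : Set G) (m : ℕ) : Subgroup G := Subgroup.closure (Aset t U m)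

lemma Agrp_mono (t : G) (U : Set G) {m m' : ℕ} (h : m ≤ m') : Agrp t U m ≤ Agrp t U m' :=
  Subgroup.closure_mono (Aset_mono t U h)

lemma mem_Agrp (t : G) (U : Set G) {m j : ℕ} (hj : j ≤ m) {u : G} (hu : u ∈ U) :
    conj' t u j ∈ Agrp t U m :=
  Subgroup.subset_closure ⟨u, hu, j, hj, rfl⟩

lemma conj'_succ (t u : G) (j : ℕ) : conj' t u (j + 1) = t⁻¹ * conj' t u j * t := by
  simp only [conj', pow_succ, mul_inv_rev]
  group

/-- The key counting lemma: the increasing chain of subgroups generated by conjugates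
stabilizes, else the group has exponential growth. -/
lemma chain_main {S : Set G} (hS : Good S) (t : G) (U : Set G) (hU : U.Finite) :
    ∃ m : ℕ, ∀ j : ℕ, ∀ u ∈ U, conj' t u j ∈ Agrp t U m := by
  obtain ⟨hfin, hsym, hgen, hsubexp⟩ := hS
  suffices h : ∃ m, ∀ u ∈ U, conj' t u (m + 1) ∈ Agrp t U m by
    obtain ⟨m, hm⟩ := h
    have hconj : ∀ x ∈ Agrp t U m, t⁻¹ * x * t ∈ Agrp t U m := by
      intro x hx
      induction hx using Subgroup.closure_induction with
      | mem y hy =>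
        obtain ⟨u, hu, j, hj, rfl⟩ := hy
        rw [← conj'_succ]
        rcases Nat.lt_or_ge j m with hlt | hge
        · exact mem_Agrp t U (by omega) hu
        · have : j = m := le_antisymm hj hge
          subst this; exact hm u hu
      | one => simpa using one_mem _
      | mul a b _ _ ha hb =>
        have : t⁻¹ * (a * b) * t = (t⁻¹ * a * t) * (t⁻¹ * b * t) := by group
        rw [this]; exact mul_mem ha hb
      | inv a _ ha =>
        have : t⁻¹ * a⁻¹ * t = (t⁻¹ * a * t)⁻¹ := by group
        rw [this]; exact inv_mem ha
    refine ⟨m, fun j => ?_⟩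
    induction j with
    | zero => exact fun u hu => mem_Agrp t U (Nat.zero_le m) hu
    | succ k ih =>
      intro u hu
      rw [conj'_succ]
      exact hconj _ (ih u hu)
  by_contra hcon
  push_neg at hcon
  -- choose a bad generator for each m
  choose u humem hubad using hcon
  set c : ℕ → G := fun j => conj' t (u j) (j + 1) with hc
  -- the nested products
  set W : (n : ℕ) → (Fin n → Bool) → G := fun n =>
    Nat.rec (motive := fun n => (Fin n → Bool) → G) (fun _ => 1)
      (fun k Wk ε => Wk (fun i => ε i.castSucc) * (if ε (Fin.last k) then c k else 1)) n
    with hW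
  have hWsucc : ∀ (k : ℕ) (ε : Fin (k+1) → Bool),
      W (k+1) ε = W k (fun i => ε i.castSucc) * (if ε (Fin.last k) then c k else 1) :=
    fun k ε => rfl
  have hcmem : ∀ {k m : ℕ}, k < m → c k ∈ Agrp t U m := fun {k m} hk =>
    mem_Agrp t U hk (humem k)
  have hWmem : ∀ (n : ℕ) (ε : Fin n → Bool), W n ε ∈ Agrp t U n := by
    intro n
    induction n with
    | zero => intro ε; exact one_mem _
    | succ k ih =>
      intro ε
      rw [hWsucc]
      refine mul_mem (Agrp_mono t U (Nat.le_succ k) (ih _)) ?_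
      split
      · exact hcmem (Nat.lt_succ_self k)
      · exact one_mem _
  -- injectivity
  have hWinj : ∀ n : ℕ, Function.Injective (W n) := by
    intro n
    induction n with
    | zero => intro ε δ _; funext i; exact absurd i.2 (by omega)
    | succ k ih =>
      intro ε δ h
      rw [hWsucc, hWsucc] at h
      by_cases hlast : ε (Fin.last k) = δ (Fin.last k)
      · rw [hlast] at h
        have h2 := mul_right_cancel h
        have h3 := ih h2
        funext i
        rcases Fin.eq_castSucc_or_eq_last i with ⟨j, rfl⟩ | rfl
        · exact congrFun h3 j
        · exact hlast
      · exfalso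
        -- wlog: one is true, the other false
        have key : ∀ (α β : Fin (k+1) → Bool), α (Fin.last k) = true → β (Fin.last k) = false →
            W k (fun i => α i.castSucc) * c k = W k (fun i => β i.castSucc) → False := by
          intro α β hα hβ hab
          have : c k = (W k (fun i => α i.castSucc))⁻¹ * W k (fun i => β i.castSucc) := by
            rw [← hab]; group
          have hmem : c k ∈ Agrp t U k := by
            rw [this]; exact mul_mem (inv_mem (hWmem k _)) (hWmem k _)
          exact hubad k hmem
        rcases Bool.eq_false_or_eq_true (ε (Fin.last k)) with h1 | h1 <;>
          rcases Bool.eq_false_or_eq_true (δ (Fin.last k)) with h2 | h2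
        · exact hlast (h1.trans h2.symm)
        · rw [h1, h2] at h
          simp only [Bool.false_eq_true, if_false, if_true, mul_one] at h
          exact key ε δ h1 h2 h
        · rw [h1, h2] at h
          simp only [Bool.false_eq_true, if_false, if_true, mul_one] at h
          exact key δ ε h2 h1 h.symm
        · exact hlast (h1.trans h2.symm)
  -- length bound
  obtain ⟨lt, hlt1, hlt⟩ := exists_ball_superset hsym hgen
    (Set.Finite.insert t (Set.finite_singleton t⁻¹))
  have ht : t ∈ (S ∪ {1} : Set G) ^ lt := hlt (by simp)
  have hti : t⁻¹ ∈ (S ∪ {1} : Set G) ^ lt := hlt (by simp)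
  obtain ⟨lU, hlU1, hlU⟩ := exists_ball_superset hsym hgen (hU.insert 1)
  have h1U : (1 : G) ∈ (S ∪ {1} : Set G) ^ lU := hlU (by simp)
  set C : ℕ := lU + 2 * lt with hC
  have hC1 : 1 ≤ C := by omega
  have hWball : ∀ (n : ℕ) (ε : Fin n → Bool), W n ε ∈ (S ∪ {1} : Set G) ^ (C * n) := by
    have hY : ∀ (n : ℕ) (ε : Fin n → Bool),
        W n ε * (t ^ n)⁻¹ ∈ (S ∪ {1} : Set G) ^ ((lU + lt) * n) := by
      intro n
      induction n with
      | zero => intro ε; simp only [pow_zero, mul_one, Nat.mul_zero, inv_one]; exact (by rw [show W 0 ε = 1 from rfl]; simp)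
      | succ k ih =>
        intro ε
        have hfac : W (k+1) ε * (t ^ (k+1))⁻¹ =
            (W k (fun i => ε i.castSucc) * (t ^ k)⁻¹) *
              (t⁻¹ * (if ε (Fin.last k) then u k else 1)) := by
          rw [hWsucc]
          rcases Bool.eq_false_or_eq_true (ε (Fin.last k)) with h1 | h1 <;>
            simp only [h1, Bool.false_eq_true, if_true, if_false, hc, conj', pow_succ', mul_one]
          · group
          · group
        rw [hfac]
        have h2 : t⁻¹ * (if ε (Fin.last k) then u k else 1) ∈
            (S ∪ {1} : Set G) ^ (lt + lU) := by
          rw [pow_add]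
          refine Set.mul_mem_mul hti ?_
          split
          · exact hlU (Set.mem_insert_of_mem _ (humem k))
          · exact h1U
        have := Set.mul_mem_mul (ih (fun i => ε i.castSucc)) h2
        rw [← pow_add] at this
        have heq : (lU + lt) * k + (lt + lU) = (lU + lt) * (k + 1) := by ring
        rwa [heq] at this
    intro n ε
    have h1 : W n ε = (W n ε * (t ^ n)⁻¹) * t ^ n := by group
    have h2 : t ^ n ∈ (S ∪ {1} : Set G) ^ (lt * n) := by
      rw [pow_mul]
      exact Set.pow_mem_pow ht
    rw [h1]
    have := Set.mul_mem_mul (hY n ε) h2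
    rw [← pow_add] at this
    have heq : (lU + lt) * n + lt * n = C * n := by rw [hC]; ring
    rwa [heq] at this
  -- now the growth contradiction
  set cexp : ℝ := (2 : ℝ) ^ ((2 * C : ℝ))⁻¹ with hcexp
  have hc1 : (1 : ℝ) < cexp := by
    rw [hcexp, show (1:ℝ) = (2:ℝ) ^ (0:ℝ) by simp]
    apply Real.rpow_lt_rpow_left_iff (by norm_num : (1:ℝ) < 2) |>.2
    positivity
  obtain ⟨R, hR⟩ := hsubexp cexp hc1
  set n : ℕ := max R 1 with hn
  have hn1 : 1 ≤ n := le_max_right R 1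
  have hRn : R ≤ C * n := le_trans (le_max_left R 1) (le_trans (Nat.le_mul_of_pos_left n hC1)
    (le_refl _))
  have hcard : ((2 : ℝ) ^ n : ℝ) ≤ (((S ∪ {1} : Set G) ^ (C * n)).ncard : ℝ) := by
    have hrange : Set.range (W n) ⊆ (S ∪ {1} : Set G) ^ (C * n) := by
      rintro x ⟨ε, rfl⟩; exact hWball n ε
    have h1 : (Set.range (W n)).ncard = 2 ^ n := by
      have := Nat.card_range_of_injective (hWinj n)
      rw [Nat.card_coe_set_eq] at this
      rw [this]
      simp [Nat.card_eq_fintype_card]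
    have h2 : (Set.range (W n)).ncard ≤ ((S ∪ {1} : Set G) ^ (C * n)).ncard :=
      Set.ncard_le_ncard hrange (ball_finite hfin _)
    rw [h1] at h2
    exact_mod_cast h2
  have hup : (((S ∪ {1} : Set G) ^ (C * n)).ncard : ℝ) ≤ cexp ^ (C * n) := hR (C * n) hRn
  have hfinal : ((2:ℝ) ^ n : ℝ) ≤ (2:ℝ) ^ ((n : ℝ) / 2) := by
    calc ((2:ℝ) ^ n : ℝ) ≤ cexp ^ (C * n) := le_trans hcard hup
    _ = (2:ℝ) ^ (((2 * C : ℝ))⁻¹ * (C * n : ℕ)) := by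
        rw [hcexp, ← Real.rpow_natCast (_ ^ _) (C * n), ← Real.rpow_mul (by norm_num)]
    _ = (2:ℝ) ^ ((n : ℝ) / 2) := by
        congr 1
        have hCne : (C : ℝ) ≠ 0 := by positivity
        push_cast
        field_simp
  rw [show ((2:ℝ) ^ n : ℝ) = (2:ℝ) ^ ((n : ℕ) : ℝ) by rw [Real.rpow_natCast]] at hfinal
  have := (Real.rpow_le_rpow_left_iff (by norm_num : (1:ℝ) < 2)).1 hfinal
  have hn1' : (1 : ℝ) ≤ (n : ℝ) := by exact_mod_cast hn1
  linarith


section Stage2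

variable {G : Type*} [Group G]

/-- Rosset's lemma: the kernel of a surjection onto `ℤ` from a f.g. group of
subexponential growth is finitely generated. -/
lemma rosset_ker {S : Set G} (hS : Good S) (ψ : G →* Multiplicative ℤ)
    (hsur : Function.Surjective ψ) : ψ.ker.FG := by
  obtain ⟨hfin, hsym, hgen, hsubexp⟩ := id hS
  obtain ⟨t, ht⟩ := hsur (Multiplicative.ofAdd 1)
  set u : G → G := fun s => t ^ (-(ψ s).toAdd) * s with hu
  have hψt : ∀ k : ℤ, ψ (t ^ k) = Multiplicative.ofAdd k := by
    intro k
    rw [map_zpow, ht, ← ofAdd_zsmul, smul_eq_mul, mul_one]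
  have hukera : ∀ s : G, ψ (u s) = 1 := by
    intro s
    rw [hu]
    simp only [map_mul, hψt]
    rw [ofAdd_neg, ofAdd_toAdd, inv_mul_cancel]
  set V : Set G := {x | ∃ s ∈ S, ∃ j : ℤ, x = (t ^ j)⁻¹ * u s * t ^ j} with hV
  set H : Subgroup G := Subgroup.closure V with hH
  have hconj : ∀ k : ℤ, ∀ x ∈ H, (t ^ k)⁻¹ * x * t ^ k ∈ H := by
    intro k x hx
    induction hx using Subgroup.closure_induction with
    | mem y hy =>
      obtain ⟨s, hs, j, rfl⟩ := hy
      have : (t ^ k)⁻¹ * ((t ^ j)⁻¹ * u s * t ^ j) * t ^ k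
          = (t ^ (j + k))⁻¹ * u s * t ^ (j + k) := by
        rw [zpow_add]; group
      rw [this]
      exact Subgroup.subset_closure ⟨s, hs, j + k, rfl⟩
    | one => simpa using one_mem _
    | mul a b _ _ ha hb =>
      have : (t ^ k)⁻¹ * (a * b) * t ^ k
          = ((t ^ k)⁻¹ * a * t ^ k) * ((t ^ k)⁻¹ * b * t ^ k) := by group
      rw [this]; exact mul_mem ha hb
    | inv a _ ha =>
      have : (t ^ k)⁻¹ * a⁻¹ * t ^ k = ((t ^ k)⁻¹ * a * t ^ k)⁻¹ := by group
      rw [this]; exact inv_mem ha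
  have key : ∀ g : G, (t ^ (ψ g).toAdd)⁻¹ * g ∈ H := by
    intro g
    have hg : g ∈ Subgroup.closure S := by rw [hgen]; trivial
    induction hg using Subgroup.closure_induction with
    | mem s hs =>
      have : (t ^ (ψ s).toAdd)⁻¹ * s = (t ^ (0:ℤ))⁻¹ * u s * t ^ (0:ℤ) := by
        rw [hu]; simp [zpow_neg]
      rw [this]
      exact Subgroup.subset_closure ⟨s, hs, 0, rfl⟩
    | one => simpa using one_mem _
    | mul a b _ _ ha hb =>
      have hab : (t ^ (ψ (a * b)).toAdd)⁻¹ * (a * b)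
          = ((t ^ (ψ b).toAdd)⁻¹ * ((t ^ (ψ a).toAdd)⁻¹ * a) * t ^ (ψ b).toAdd)
            * ((t ^ (ψ b).toAdd)⁻¹ * b) := by
        rw [map_mul, toAdd_mul, zpow_add]
        group
      rw [hab]
      exact mul_mem (hconj _ _ ha) hb
    | inv a _ ha =>
      have hainv : (t ^ (ψ a⁻¹).toAdd)⁻¹ * a⁻¹
          = (t ^ (-(ψ a).toAdd))⁻¹ * ((t ^ (ψ a).toAdd)⁻¹ * a)⁻¹ * t ^ (-(ψ a).toAdd) := by
        rw [map_inv, toAdd_inv]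
        group
      rw [hainv]
      exact hconj _ _ (inv_mem ha)
  have hker : ψ.ker = H := by
    apply le_antisymm
    · intro g hg
      have h0 : (ψ g).toAdd = 0 := by
        rw [MonoidHom.mem_ker] at hg; rw [hg]; rfl
      have := key g
      rwa [h0, zpow_zero, inv_one, one_mul] at this
    · rw [hH, Subgroup.closure_le]
      rintro x ⟨s, hs, j, rfl⟩
      have : ψ ((t ^ j)⁻¹ * u s * t ^ j) = 1 := by
        rw [map_mul, map_mul, map_inv, hukera, hψt]
        group
      exact this
  -- finite generation via the chain lemma
  set U : Set G := u '' S with hUdef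
  have hUfin : U.Finite := hfin.image u
  obtain ⟨m₁, hm₁⟩ := chain_main hS t U hUfin
  obtain ⟨m₂, hm₂⟩ := chain_main hS t⁻¹ U hUfin
  set F : Set G := Aset t U m₁ ∪ Aset t⁻¹ U m₂ with hF
  have hFfin : F.Finite := (Aset_finite t hUfin m₁).union (Aset_finite t⁻¹ hUfin m₂)
  have hFsub : Subgroup.closure F ≤ ψ.ker := by
    rw [Subgroup.closure_le]
    rintro x (⟨v, ⟨s, _, rfl⟩, j, _, rfl⟩ | ⟨v, ⟨s, _, rfl⟩, j, _, rfl⟩) <;>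
    · show _ ∈ ψ.ker
      rw [MonoidHom.mem_ker]
      simp only [conj', map_mul, map_inv, hukera]
      group
  have hsubF : ψ.ker ≤ Subgroup.closure F := by
    rw [hker, hH, Subgroup.closure_le]
    rintro x ⟨s, hs, j, rfl⟩
    have hUs : u s ∈ U := ⟨s, hs, rfl⟩
    rcases Int.natAbs_eq j with hj | hj
    · have : (t ^ j)⁻¹ * u s * t ^ j = conj' t (u s) j.natAbs := by
        rw [conj', ← zpow_natCast t j.natAbs, ← hj]
      rw [this]
      exact Subgroup.closure_mono (Set.subset_union_left) (hm₁ j.natAbs (u s) hUs)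
    · have hj' : (j.natAbs : ℤ) = -j := by omega
      have : (t ^ j)⁻¹ * u s * t ^ j = conj' t⁻¹ (u s) j.natAbs := by
        rw [conj', inv_pow, inv_inv, ← zpow_natCast t j.natAbs, hj', zpow_neg, inv_inv]
      rw [this]
      exact Subgroup.closure_mono (Set.subset_union_right) (hm₂ j.natAbs (u s) hUs)
  rw [Subgroup.fg_iff]
  exact ⟨F, le_antisymm hFsub hsubF, hFfin⟩

/-- A finitely generated subgroup of a group with `Good` generating set again
admits a `Good` generating set. -/
lemma good_subgroup {S : Set G} (hS : Good S) (K : Subgroup G) (hK : K.FG) :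
    ∃ T : Set ↥K, Good T := by
  obtain ⟨hfin, hsym, hgen, hsubexp⟩ := id hS
  haveI : Group.FG ↥K := (Group.fg_iff_subgroup_fg K).2 hK
  obtain ⟨T₀, hT₀gen, hT₀fin⟩ := Group.fg_iff.1 this
  refine ⟨T₀ ∪ T₀⁻¹, hT₀fin.union hT₀fin.inv, ?_, ?_, ?_⟩
  · ext x; simp [Set.mem_inv, or_comm]
  · exact le_antisymm le_top (hT₀gen ▸ Subgroup.closure_mono Set.subset_union_left)
  · -- subexponential growth is inherited
    set T : Set ↥K := T₀ ∪ T₀⁻¹ with hT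
    obtain ⟨L, hL1, hL⟩ := exists_ball_superset hsym hgen
      ((hT₀fin.union hT₀fin.inv).insert 1 |>.image (Subtype.val))
    have him : ∀ r : ℕ, (Subtype.val '' ((T ∪ {1} : Set ↥K) ^ r) : Set G)
        ⊆ (S ∪ {1} : Set G) ^ (L * r) := by
      intro r
      have him_pow : (Subtype.val '' ((T ∪ {1} : Set ↥K) ^ r) : Set G)
          = (Subtype.val '' (T ∪ {1} : Set ↥K)) ^ r := by
        induction r with
        | zero =>
          rw [pow_zero, pow_zero]
          ext x
          simp [Set.mem_one]
        | succ k ih =>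
          rw [pow_succ, pow_succ, ← ih]
          ext x
          constructor
          · rintro ⟨y, ⟨a, ha, b, hb, rfl⟩, rfl⟩
            exact ⟨a.1, ⟨a, ha, rfl⟩, b.1, ⟨b, hb, rfl⟩, rfl⟩
          · rintro ⟨-, ⟨a, ha, rfl⟩, -, ⟨b, hb, rfl⟩, rfl⟩
            exact ⟨a * b, Set.mul_mem_mul ha hb, rfl⟩
      rw [him_pow, pow_mul]
      apply Set.pow_subset_pow_left
      refine subset_trans ?_ hL
      intro x hx
      rcases hx with ⟨y, hy, rfl⟩
      rcases hy with hy | hy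
      · exact ⟨y, Set.mem_insert_of_mem _ hy, rfl⟩
      · simp only [Set.mem_singleton_iff] at hy
        exact ⟨y, by rw [hy]; exact Set.mem_insert _ _, rfl⟩
    intro c hc
    have hcpos : (0:ℝ) < c := lt_trans zero_lt_one hc
    set c' : ℝ := c ^ ((L:ℝ))⁻¹ with hc'
    have hc'1 : 1 < c' := by
      rw [hc', show (1:ℝ) = c ^ (0:ℝ) by simp]
      apply Real.rpow_lt_rpow_left_iff hc |>.2
      positivity
    obtain ⟨R, hR⟩ := hsubexp c' hc'1
    refine ⟨R, fun r hr => ?_⟩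
    have hLr : R ≤ L * r := le_trans hr (Nat.le_mul_of_pos_left r hL1)
    have h1 : ((T ∪ {1} : Set ↥K) ^ r).ncard
        = ((Subtype.val '' ((T ∪ {1} : Set ↥K) ^ r) : Set G)).ncard :=
      (Set.ncard_image_of_injective _ Subtype.val_injective).symm
    have h2 : ((Subtype.val '' ((T ∪ {1} : Set ↥K) ^ r) : Set G)).ncard
        ≤ ((S ∪ {1} : Set G) ^ (L * r)).ncard :=
      Set.ncard_le_ncard (him r) (ball_finite hfin _)
    calc (((T ∪ {1} : Set ↥K) ^ r).ncard : ℝ)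
        ≤ (((S ∪ {1} : Set G) ^ (L * r)).ncard : ℝ) := by rw [h1]; exact_mod_cast h2
      _ ≤ c' ^ (L * r) := hR (L * r) hLr
      _ = c ^ r := by
          rw [hc', ← Real.rpow_natCast (c ^ _) (L * r), ← Real.rpow_mul (le_of_lt hcpos)]
          rw [← Real.rpow_natCast c r]
          congr 1
          have : (L:ℝ) ≠ 0 := by positivity
          push_cast
          field_simp
  
end Stage2



section Stage3

universe u v

lemma fg_of_subgroupOf_fg {G : Type*} [Group G] {N K : Subgroup G} (hNK : N ≤ K)
    (h : (N.subgroupOf K).FG) : N.FG := by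
  obtain ⟨F, hF, hFfin⟩ := (Subgroup.fg_iff _).1 h
  rw [Subgroup.fg_iff]
  refine ⟨Subtype.val '' F, ?_, hFfin.image _⟩
  have h1 : Subgroup.closure ((K.subtype : ↥K →* G) '' F)
      = Subgroup.map K.subtype (Subgroup.closure F) := (MonoidHom.map_closure _ _).symm
  have h2 : ((K.subtype : ↥K →* G) '' F : Set G) = Subtype.val '' F := rfl
  rw [← h2, h1, hF, Subgroup.subgroupOf_map_subtype, inf_eq_left.2 hNK]

lemma abelian_step : ∀ (n : ℕ) {G : Type u} [Group G] (S : Set G), Good S →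
    ∀ (N : Subgroup G) [N.Normal], ∀ (T : Type v) [AddCommGroup T] [Finite T],
      (Additive (G ⧸ N) ≃+ (Fin n → ℤ) × T) → N.FG := by
  intro n
  induction n with
  | zero =>
    intro G _ S hS N _ T _ _ e
    haveI : Subsingleton (Fin 0 → ℤ) := ⟨fun a b => funext fun i => absurd i.2 (by omega)⟩
    haveI : Finite (Fin 0 → ℤ) := Finite.of_subsingleton
    haveI : Finite (Additive (G ⧸ N)) := Finite.of_equiv _ e.toEquiv.symm
    haveI : Finite (G ⧸ N) := ‹Finite (Additive (G ⧸ N))›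
    haveI : Group.FG G := Group.fg_iff.2 ⟨S, hS.2.2.1, hS.1⟩
    haveI : N.FiniteIndex := N.finiteIndex_of_finite_quotient
    exact (Group.fg_iff_subgroup_fg N).1 inferInstance
  | succ n ih =>
    intro G _ S hS N _ T _ _ e
    classical
    set π := QuotientGroup.mk' N with hπ
    -- the character to `ℤ` given by the last coordinate
    set χ : (G ⧸ N) →* Multiplicative ℤ :=
      { toFun := fun q => Multiplicative.ofAdd ((e (Additive.ofMul q)).1 (Fin.last n))
        map_one' := by
          show Multiplicative.ofAdd ((e (Additive.ofMul (1 : G ⧸ N))).1 (Fin.last n)) = 1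
          rw [show Additive.ofMul (1 : G ⧸ N) = 0 from rfl, map_zero]
          rfl
        map_mul' := by
          intro a b
          simp only [ofMul_mul, map_add, Prod.fst_add, Pi.add_apply, ofAdd_add] } with hχ
    set ψ : G →* Multiplicative ℤ := χ.comp π with hψ
    have hχapp : ∀ q : G ⧸ N,
        χ q = Multiplicative.ofAdd ((e (Additive.ofMul q)).1 (Fin.last n)) := fun _ => rfl
    have hψsur : Function.Surjective ψ := by
      intro m
      obtain ⟨g, hg⟩ := QuotientGroup.mk'_surjective N
        (Additive.toMul (e.symm (Pi.single (Fin.last n) m.toAdd, 0)))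
      refine ⟨g, ?_⟩
      show χ (π g) = m
      rw [hg, hχapp, ofMul_toMul, AddEquiv.apply_symm_apply]
      simp
    set K : Subgroup G := ψ.ker with hK
    have hNK : N ≤ K := by
      intro x hx
      show ψ x ∈ ({1} : Set (Multiplicative ℤ))
      have : π x = 1 := by
        rw [hπ]
        exact (QuotientGroup.eq_one_iff x).2 hx
      show χ (π x) ∈ _
      rw [this, map_one]
      rfl
    have hKfg : K.FG := rosset_ker hS ψ hψsur
    obtain ⟨TK, hTK⟩ := good_subgroup hS K hKfg
    set N' : Subgroup ↥K := N.subgroupOf K with hN'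
    haveI : N'.Normal := Subgroup.Normal.subgroupOf ‹N.Normal› K
    set f : ↥K →* G ⧸ N := π.comp K.subtype with hf
    have hfker : f.ker = N' := by
      ext x
      rw [MonoidHom.mem_ker, hN', Subgroup.mem_subgroupOf]
      show π x.val = 1 ↔ _
      rw [hπ]
      exact QuotientGroup.eq_one_iff x.val
    have hfrange : f.range = χ.ker := by
      ext q
      constructor
      · rintro ⟨x, rfl⟩
        have : ψ x.val = 1 := x.2
        rw [MonoidHom.mem_ker]
        exact this
      · intro hq
        obtain ⟨g, hg⟩ := QuotientGroup.mk'_surjective N q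
        have hgK : g ∈ K := by
          show χ (π g) = 1
          rw [hg]
          exact hq
        exact ⟨⟨g, hgK⟩, hg⟩
    set m1 : (↥K ⧸ N') ≃* ↥(χ.ker) :=
      (QuotientGroup.quotientMulEquivOfEq hfker.symm).trans
        ((QuotientGroup.quotientKerEquivRange f).trans (MulEquiv.subgroupCongr hfrange))
      with hm1
    have hmemker : ∀ q : G ⧸ N, q ∈ χ.ker ↔ (e (Additive.ofMul q)).1 (Fin.last n) = 0 := by
      intro q
      rw [MonoidHom.mem_ker, hχapp]
      constructor
      · intro h
        have := congrArg Multiplicative.toAdd h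
        simpa using this
      · intro h
        rw [h]
        rfl
    -- the splitting of the kernel of the last-coordinate projection
    set E : Additive ↥(χ.ker) ≃+ (Fin n → ℤ) × T :=
      { toFun := fun x =>
          ((fun i => (e (Additive.ofMul ((Additive.toMul x : ↥(χ.ker)) : G ⧸ N))).1 i.castSucc),
            (e (Additive.ofMul ((Additive.toMul x : ↥(χ.ker)) : G ⧸ N))).2)
        invFun := fun p => Additive.ofMul (α := ↥(χ.ker))
          ⟨Additive.toMul (e.symm (Fin.snoc p.1 0, p.2)), by
            rw [hmemker, ofMul_toMul, AddEquiv.apply_symm_apply]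
            show (Fin.snoc p.1 0 : Fin (n+1) → ℤ) (Fin.last n) = 0
            exact Fin.snoc_last _ _⟩
        left_inv := by
          intro x
          have hmem := (hmemker _).1 (Additive.toMul x).2
          apply Additive.toMul.injective
          apply Subtype.ext
          have hfst : (Fin.snoc (fun i => (e (Additive.ofMul
              ((Additive.toMul x : ↥(χ.ker)) : G ⧸ N))).1 i.castSucc) 0 : Fin (n+1) → ℤ)
              = (e (Additive.ofMul ((Additive.toMul x : ↥(χ.ker)) : G ⧸ N))).1 := by
            funext i
            refine Fin.lastCases ?_ ?_ i
            · rw [Fin.snoc_last]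
              exact hmem.symm
            · intro j
              rw [Fin.snoc_castSucc]
          have hpair : ((Fin.snoc (fun i => (e (Additive.ofMul
              ((Additive.toMul x : ↥(χ.ker)) : G ⧸ N))).1 i.castSucc) 0 : Fin (n+1) → ℤ),
              (e (Additive.ofMul ((Additive.toMul x : ↥(χ.ker)) : G ⧸ N))).2)
              = e (Additive.ofMul ((Additive.toMul x : ↥(χ.ker)) : G ⧸ N)) := by
            rw [hfst]
          show Additive.toMul (e.symm _) = _
          rw [hpair, AddEquiv.symm_apply_apply, toMul_ofMul]
        right_inv := by
          intro p
          refine Prod.ext ?_ ?_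
          · show (fun i => (e (Additive.ofMul (Additive.toMul _))).1 i.castSucc) = p.1
            rw [ofMul_toMul, AddEquiv.apply_symm_apply]
            funext i
            show (Fin.snoc p.1 0 : Fin (n+1) → ℤ) i.castSucc = p.1 i
            exact Fin.snoc_castSucc _ _ _
          · show (e (Additive.ofMul (Additive.toMul _))).2 = p.2
            rw [ofMul_toMul, AddEquiv.apply_symm_apply]
        map_add' := by
          intro x y
          have hcoe : ((Additive.toMul (x + y) : ↥(χ.ker)) : G ⧸ N)
              = ((Additive.toMul x : ↥(χ.ker)) : G ⧸ N) * ((Additive.toMul y : ↥(χ.ker)) : G ⧸ N) := by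
            rw [toMul_add]
            rfl
          refine Prod.ext ?_ ?_
          · funext i
            show (e (Additive.ofMul _)).1 i.castSucc = _
            rw [hcoe, ofMul_mul, map_add]
            rfl
          · show (e (Additive.ofMul _)).2 = _
            rw [hcoe, ofMul_mul, map_add]
            rfl } with hE
    have e' : Additive (↥K ⧸ N') ≃+ (Fin n → ℤ) × T := (MulEquiv.toAdditive m1).trans E
    exact fg_of_subgroupOf_fg hNK (ih TK hTK N' T e')

end Stage3


section Stage4

open scoped DirectSum
open scoped commutatorElement

universe u

lemma solvable_step : ∀ (n : ℕ) {G : Type u} [Group G] (S : Set G), Good S →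
    ∀ (N : Subgroup G) [N.Normal], derivedSeries (G ⧸ N) n = ⊥ → N.FG := by
  intro n
  induction n with
  | zero =>
    intro G _ S hS N _ hd
    rw [derivedSeries_zero] at hd
    have hN : N = ⊤ := by
      ext g
      simp only [Subgroup.mem_top, iff_true]
      have h1 : ((g : G ⧸ N)) ∈ (⊥ : Subgroup (G ⧸ N)) := hd ▸ Subgroup.mem_top _
      rw [Subgroup.mem_bot] at h1
      exact (QuotientGroup.eq_one_iff g).1 h1
    rw [hN]
    exact (Subgroup.fg_iff ⊤).2 ⟨S, hS.2.2.1, hS.1⟩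
  | succ n ih =>
    intro G _ S hS N _ hd
    set π := QuotientGroup.mk' N with hπ
    set D : Subgroup (G ⧸ N) := derivedSeries (G ⧸ N) 1 with hD
    haveI : D.Normal := by rw [hD]; exact derivedSeries_normal _ _
    set M : Subgroup G := D.comap π with hM
    haveI : M.Normal := Subgroup.normal_comap π
    have hNM : N ≤ M := by
      intro x hx
      show π x ∈ D
      have hx1 : π x = 1 := (QuotientGroup.eq_one_iff x).2 hx
      rw [hx1]
      exact one_mem D
    letI instCG : CommGroup (G ⧸ M) :=
      { (inferInstance : Group (G ⧸ M)) with
        mul_comm := by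
          intro a b
          obtain ⟨x, rfl⟩ := QuotientGroup.mk_surjective a
          obtain ⟨y, rfl⟩ := QuotientGroup.mk_surjective b
          rw [← QuotientGroup.mk_mul, ← QuotientGroup.mk_mul, QuotientGroup.eq]
          have hmem : π ((x * y)⁻¹ * (y * x)) ∈ D := by
            have heq : (x * y)⁻¹ * (y * x) = ⁅y⁻¹, x⁻¹⁆ := by
              simp only [commutatorElement_def]
              group
            rw [heq, map_commutatorElement, hD, derivedSeries_one]
            exact Subgroup.commutator_mem_commutator (Subgroup.mem_top _) (Subgroup.mem_top _)
          exact hmem }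
    haveI : Group.FG G := Group.fg_iff.2 ⟨S, hS.2.2.1, hS.1⟩
    haveI : Group.FG (G ⧸ M) := QuotientGroup.fg M
    obtain ⟨k, ι, fι, p, hp, ex, ⟨eq⟩⟩ :=
      AddCommGroup.equiv_free_prod_directSum_zmod (Additive (G ⧸ M))
    haveI : ∀ i : ι, NeZero (p i ^ ex i) := fun i => ⟨pow_ne_zero _ (hp i).ne_zero⟩
    haveI : Finite (⨁ i, ZMod (p i ^ ex i)) :=
      Finite.of_equiv _ DFinsupp.equivFunOnFintype.symm
    have eM : Additive (G ⧸ M) ≃+ (Fin k → ℤ) × (⨁ i, ZMod (p i ^ ex i)) :=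
      eq.trans (AddEquiv.prodCongr Finsupp.addEquivFunOnFinite (AddEquiv.refl _))
    have hMfg : M.FG := abelian_step k S hS M _ eM
    obtain ⟨TM, hTM⟩ := good_subgroup hS M hMfg
    set N' : Subgroup ↥M := N.subgroupOf M with hN'
    haveI : N'.Normal := Subgroup.Normal.subgroupOf ‹N.Normal› M
    set f : ↥M →* G ⧸ N := π.comp M.subtype with hf
    have hfker : f.ker = N' := by
      ext x
      rw [MonoidHom.mem_ker, hN', Subgroup.mem_subgroupOf]
      show π x.val = 1 ↔ _
      exact QuotientGroup.eq_one_iff x.val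
    have hfrange : f.range = D := by
      ext q
      constructor
      · rintro ⟨x, rfl⟩
        exact x.2
      · intro hq
        obtain ⟨g, hg⟩ := QuotientGroup.mk'_surjective N q
        refine ⟨⟨g, ?_⟩, hg⟩
        show π g ∈ D
        rw [hg]
        exact hq
    set m1 : (↥M ⧸ N') ≃* ↥D :=
      (QuotientGroup.quotientMulEquivOfEq hfker.symm).trans
        ((QuotientGroup.quotientKerEquivRange f).trans (MulEquiv.subgroupCongr hfrange))
      with hm1
    have hmapD : ∀ j : ℕ,
        Subgroup.map D.subtype (derivedSeries ↥D j) ≤ derivedSeries (G ⧸ N) (j + 1) := by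
      intro j
      induction j with
      | zero =>
        rw [derivedSeries_zero]
        have h1 : Subgroup.map D.subtype ⊤ = D := by
          rw [← MonoidHom.range_eq_map, Subgroup.range_subtype]
        rw [h1, zero_add]
      | succ j ihj =>
        rw [derivedSeries_succ, derivedSeries_succ, Subgroup.map_commutator]
        exact Subgroup.commutator_mono ihj ihj
    have hDbot : derivedSeries ↥D n = ⊥ := by
      have h1 := hmapD n
      rw [hd] at h1
      exact (Subgroup.map_eq_bot_iff_of_injective _ (D.subtype_injective)).1 (le_bot_iff.1 h1)
    have hquot : derivedSeries (↥M ⧸ N') n = ⊥ := by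
      have h2 := map_derivedSeries_eq (f := m1.symm.toMonoidHom) m1.symm.surjective n
      rw [← h2, hDbot, Subgroup.map_bot]
    exact fg_of_subgroupOf_fg hNM (ih TM hTM N' hquot)

end Stage4

end RossetAux

/-- **Rosset's theorem.** If `G` is a finitely generated group of subexponential growth
(with respect to a finite symmetric generating set `S`, where balls are
`B r = (S ∪ {1}) ^ r`), and `N` is a normal subgroup of `G` such that the quotient `G ⧸ N`
is solvable, then `N` is finitely generated. -/
theorem rosset_fg {G : Type*} [Group G] (S : Set G) (hfin : S.Finite)
    (hsym : S⁻¹ = S) (hgen : Subgroup.closure S = ⊤)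
    (hsubexp : ∀ c : ℝ, 1 < c → ∃ R : ℕ, ∀ r : ℕ, R ≤ r →
      ((((S ∪ {1} : Set G)) ^ r).ncard : ℝ) ≤ c ^ r)
    (N : Subgroup G) [N.Normal] [Group.IsSolvable (G ⧸ N)] :
    N.FG := by
  obtain ⟨n, hn⟩ := (‹Group.IsSolvable (G ⧸ N)› : Group.IsSolvable (G ⧸ N)).solvable
  exact RossetAux.solvable_step n S ⟨hfin, hsym, hgen, hsubexp⟩ N hn
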